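/- If m_1, m_2 > 1 are integers with ln m_1 / ln m_2 irrational, then the set {m_1^{n_1} m_2^{n_2} : n_1, n_2 ∈ ℤ} is dense in (0, ∞), and hence its closure in [0, ∞) is all of [0, ∞). -/

import Mathlib

private lemma zpow_eq_exp {c : ℝ} (hc : 0 < c) (n : ℤ) :
    c ^ n = Real.exp (n * Real.log c) := by
  rw [← Real.rpow_intCast c n, Real.rpow_def_of_pos hc, mul_comm]

/-- If `ln m₁ / ln m₂` is irrational then `{m₁^{n₁} m₂^{n₂} : n₁, n₂ ∈ ℤ}` is
dense in `(0, ∞)`, and its closure in `ℝ` is `[0, ∞)`. -/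
theorem dense_powers_of_irrational_log_ratio (m₁ m₂ : ℕ) (h₁ : 1 < m₁) (h₂ : 1 < m₂)
    (hirr : Irrational (Real.log m₁ / Real.log m₂)) :
    (∀ x ∈ Set.Ioi (0 : ℝ),
        x ∈ closure {x : ℝ | ∃ n₁ n₂ : ℤ, x = (m₁ : ℝ) ^ n₁ * (m₂ : ℝ) ^ n₂}) ∧
    closure {x : ℝ | ∃ n₁ n₂ : ℤ, x = (m₁ : ℝ) ^ n₁ * (m₂ : ℝ) ^ n₂} =
      Set.Ici (0 : ℝ) := by
  set a : ℝ := Real.log m₁ with ha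
  set b : ℝ := Real.log m₂ with hb
  have hm₁ : (1 : ℝ) < m₁ := by exact_mod_cast h₁
  have hm₂ : (1 : ℝ) < m₂ := by exact_mod_cast h₂
  have ha0 : 0 < a := Real.log_pos hm₁
  have hb0 : 0 < b := Real.log_pos hm₂
  set S : AddSubgroup ℝ := AddSubgroup.closure {a, b} with hS
  have haS : a ∈ S := AddSubgroup.subset_closure (by simp)
  have hbS : b ∈ S := AddSubgroup.subset_closure (by simp [Set.mem_insert_iff])
  have hdense : Dense (S : Set ℝ) := by
    rcases S.dense_or_cyclic with h | ⟨c, hc⟩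
    · exact h
    · exfalso
      have haC : a ∈ AddSubgroup.closure ({c} : Set ℝ) := hc ▸ haS
      have hbC : b ∈ AddSubgroup.closure ({c} : Set ℝ) := hc ▸ hbS
      rw [AddSubgroup.mem_closure_singleton] at haC hbC
      obtain ⟨p, hp⟩ := haC
      obtain ⟨q, hq⟩ := hbC
      simp only [zsmul_eq_mul] at hp hq
      have hq0 : (q : ℝ) ≠ 0 := by
        rintro h
        rw [← hq, h, zero_mul] at hb0
        exact lt_irrefl 0 hb0
      have hc0 : c ≠ 0 := by
        rintro rfl
        rw [mul_zero] at hq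
        rw [← hq] at hb0
        exact lt_irrefl 0 hb0
      apply hirr
      refine ⟨(p : ℚ) / (q : ℚ), ?_⟩
      push_cast
      rw [← hp, ← hq]
      field_simp
  set T : Set ℝ := {x : ℝ | ∃ n₁ n₂ : ℤ, x = (m₁ : ℝ) ^ n₁ * (m₂ : ℝ) ^ n₂} with hT
  have hm₁0 : (0 : ℝ) < m₁ := lt_trans one_pos hm₁
  have hm₂0 : (0 : ℝ) < m₂ := lt_trans one_pos hm₂
  have himg : Real.exp '' (S : Set ℝ) ⊆ T := by
    rintro _ ⟨y, hy, rfl⟩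
    rw [hS, SetLike.mem_coe, AddSubgroup.mem_closure_pair] at hy
    obtain ⟨n₁, n₂, hn⟩ := hy
    refine ⟨n₁, n₂, ?_⟩
    rw [← hn, zpow_eq_exp hm₁0, zpow_eq_exp hm₂0, ← Real.exp_add]
    congr 1
    simp [zsmul_eq_mul]
    rfl
  have hIoi : ∀ x ∈ Set.Ioi (0 : ℝ), x ∈ closure T := by
    intro x hx
    have hx0 : 0 < x := hx
    have h1 : Real.log x ∈ closure (S : Set ℝ) := hdense _
    have h2 : x ∈ Real.exp '' closure (S : Set ℝ) :=
      ⟨Real.log x, h1, Real.exp_log hx0⟩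
    have h3 : Real.exp '' closure (S : Set ℝ) ⊆ closure (Real.exp '' (S : Set ℝ)) :=
      image_closure_subset_closure_image Real.continuous_exp
    exact closure_mono himg (h3 h2)
  refine ⟨hIoi, le_antisymm ?_ ?_⟩
  · apply closure_minimal _ isClosed_Ici
    rintro _ ⟨n₁, n₂, rfl⟩
    exact le_of_lt (mul_pos (zpow_pos hm₁0 _) (zpow_pos hm₂0 _))
  · rw [← closure_Ioi (0 : ℝ)]
    exact closure_minimal (fun x hx => hIoi x hx) isClosed_closure
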